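/- arXiv:2208.06529 — 2 statements merged into one kernel-verified Lean document; each statement's English description precedes it below -/
import Mathlib

section
/- Let (T, μ, η, m, m_I) be a bimonad on a monoidal category. Then the left fusion operator h^l_{A,B} : T(A ⊗ T(B)) → T(A) ⊗ T(B) is a T-algebra morphism from the free algebra (T(A ⊗ T(B)), μ_{A⊗T(B)}) to the tensor product algebra (T(A), μ_A) ⊗^T (T(B), μ_B), where the latter has structure map (μ_A ⊗ μ_B) ∘ m_{T(A),T(B)}. -/
open CategoryTheory MonoidalCategory

universe v u

/-- A bimonad (comonoidal/opmonoidal monad) on a monoidal category. -/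
structure Bimonad (C : Type u) [Category.{v} C] [MonoidalCategory C] where
  T : Monad C
  m : ∀ A B : C, T.obj (A ⊗ B) ⟶ T.obj A ⊗ T.obj B
  mI : T.obj (𝟙_ C) ⟶ 𝟙_ C
  m_natural : ∀ {A A' B B' : C} (f : A ⟶ A') (g : B ⟶ B'),
    T.map (f ⊗ₘ g) ≫ m A' B' = m A B ≫ (T.map f ⊗ₘ T.map g)
  m_assoc : ∀ A B D : C,
    m (A ⊗ B) D ≫ (m A B ▷ T.obj D) ≫ (α_ (T.obj A) (T.obj B) (T.obj D)).hom =
      T.map (α_ A B D).hom ≫ m A (B ⊗ D) ≫ (T.obj A ◁ m B D)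
  m_left_unit : ∀ A : C,
    T.map (λ_ A).inv ≫ m (𝟙_ C) A ≫ (mI ▷ T.obj A) ≫ (λ_ (T.obj A)).hom = 𝟙 (T.obj A)
  m_right_unit : ∀ A : C,
    T.map (ρ_ A).inv ≫ m A (𝟙_ C) ≫ (T.obj A ◁ mI) ≫ (ρ_ (T.obj A)).hom = 𝟙 (T.obj A)
  mu_comonoidal : ∀ A B : C,
    T.μ.app (A ⊗ B) ≫ m A B =
      T.map (m A B) ≫ m (T.obj A) (T.obj B) ≫ (T.μ.app A ⊗ₘ T.μ.app B)
  mu_counit : T.μ.app (𝟙_ C) ≫ mI = T.map mI ≫ mI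
  eta_comonoidal : ∀ A B : C, T.η.app (A ⊗ B) ≫ m A B = T.η.app A ⊗ₘ T.η.app B
  eta_counit : T.η.app (𝟙_ C) ≫ mI = 𝟙 (𝟙_ C)

namespace Bimonad

variable {C : Type u} [Category.{v} C] [MonoidalCategory C]

/-- The left fusion operator `h^l_{A,B} = (1 ⊗ μ_B) ∘ m_{A,T(B)}`. -/
def hl (W : Bimonad C) (A B : C) : W.T.obj (A ⊗ W.T.obj B) ⟶ W.T.obj A ⊗ W.T.obj B :=
  W.m A (W.T.obj B) ≫ (W.T.obj A ◁ W.T.μ.app B)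

/-- The right fusion operator `h^r_{A,B} = (μ_A ⊗ 1) ∘ m_{T(A),B}`. -/
def hr (W : Bimonad C) (A B : C) : W.T.obj (W.T.obj A ⊗ B) ⟶ W.T.obj A ⊗ W.T.obj B :=
  W.m (W.T.obj A) B ≫ (W.T.μ.app A ▷ W.T.obj B)

end Bimonad

/-- The left fusion operator is a T-algebra morphism from the free algebra on `A ⊗ T B`
to the tensor product algebra of the free algebras on `A` and `B`. -/
theorem hl_is_algebra_hom {C : Type u} [Category.{v} C] [MonoidalCategory C]
    (W : Bimonad C) (A B : C) :
    W.T.μ.app (A ⊗ W.T.obj B) ≫ W.hl A B =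
      W.T.map (W.hl A B) ≫ W.m (W.T.obj A) (W.T.obj B) ≫ (W.T.μ.app A ⊗ₘ W.T.μ.app B) := by
  have h1 := W.mu_comonoidal A (W.T.obj B)
  have h2 := W.m_natural (𝟙 (W.T.obj A)) (W.T.μ.app B)
  rw [CategoryTheory.Functor.map_id, MonoidalCategory.id_tensorHom,
    MonoidalCategory.id_tensorHom] at h2
  simp only [Bimonad.hl, Functor.map_comp, ← Category.assoc, h1]
  simp only [Category.assoc, h2]
  simp only [← MonoidalCategory.id_tensorHom, MonoidalCategory.tensorHom_comp_tensorHom, Category.comp_id,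
    Category.id_comp, Monad.assoc]
  rfl
end

section
/- Let (T, μ, η, m, m_I) be a Hopf monad on a monoidal category (a bimonad whose fusion operators are invertible). If η_I ∘ m_I = 1_{T(I)}, then T is an idempotent monad, i.e., every μ_A is an isomorphism. -/
open CategoryTheory MonoidalCategory

universe v u

/-- A Hopf monad (a bimonad with invertible fusion operators) whose unit at the monoidal
unit is inverse to the counit is an idempotent monad. -/
theorem hopf_monad_idempotent_of_unit {C : Type u} [Category.{v} C] [MonoidalCategory C]
    (W : Bimonad C)
    (hl_iso : ∀ A B : C, IsIso (W.hl A B))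
    (hr_iso : ∀ A B : C, IsIso (W.hr A B))
    (h : W.mI ≫ W.T.η.app (𝟙_ C) = 𝟙 (W.T.obj (𝟙_ C))) :
    ∀ A : C, IsIso (W.T.μ.app A) := by
  intro A
  have hmI : IsIso W.mI := ⟨W.T.η.app (𝟙_ C), h, W.eta_counit⟩
  have key : W.T.μ.app A =
      W.T.map (λ_ (W.T.obj A)).inv ≫ W.hl (𝟙_ C) A ≫ (W.mI ▷ W.T.obj A) ≫
        (λ_ (W.T.obj A)).hom := by
    have h1 := W.m_left_unit (W.T.obj A)
    calc W.T.μ.app A = 𝟙 _ ≫ W.T.μ.app A := by simp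
    _ = (W.T.map (λ_ (W.T.obj A)).inv ≫ W.m (𝟙_ C) (W.T.obj A) ≫
          (W.mI ▷ W.T.obj (W.T.obj A)) ≫ (λ_ (W.T.obj (W.T.obj A))).hom) ≫ W.T.μ.app A := by
        rw [h1]; rfl
    _ = W.T.map (λ_ (W.T.obj A)).inv ≫ W.m (𝟙_ C) (W.T.obj A) ≫
          (W.mI ▷ W.T.obj (W.T.obj A)) ≫ (𝟙_ C ◁ W.T.μ.app A) ≫ (λ_ (W.T.obj A)).hom := by
        simp [MonoidalCategory.leftUnitor_naturality]
    _ = W.T.map (λ_ (W.T.obj A)).inv ≫ W.m (𝟙_ C) (W.T.obj A) ≫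
          (W.T.obj (𝟙_ C) ◁ W.T.μ.app A) ≫ (W.mI ▷ W.T.obj A) ≫ (λ_ (W.T.obj A)).hom := by
        rw [← MonoidalCategory.whisker_exchange_assoc]
    _ = W.T.map (λ_ (W.T.obj A)).inv ≫ W.hl (𝟙_ C) A ≫ (W.mI ▷ W.T.obj A) ≫
          (λ_ (W.T.obj A)).hom := by
        simp [Bimonad.hl]
  rw [key]
  haveI := hl_iso (𝟙_ C) A
  infer_instance
end
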